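/- Let k ≥ 4 be an integer, f(u) := (k²/2) sin(2u), and for λ, μ > 0 let G_{λ,μ}(r) := f(Q_λ(r) - Q_μ(r)) - f(Q_λ(r)) + f(Q_μ(r)) - 4 (r/μ)^k ΛQ_λ(r)² - 4 (r/λ)^{-k} ΛQ_μ(r)², a smooth function of r. There is a constant C > 0 such that for all λ, μ > 0 with ν := λ/μ ≤ 1/2: (∫₀^∞ r^{-4} (∂_r G_{λ,μ}(r))² r dr)^{1/2} ≤ C ν^{2k}/λ². -/

import Mathlib

open MeasureTheory Set Filter

noncomputable section

/-- The `k`-equivariant harmonic map profile `Q(r) = 2 arctan(r^k)`. -/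
def Qfun (k : ℕ) (r : ℝ) : ℝ := 2 * Real.arctan (r ^ k)

/-- `ΛQ(r) = 2k r^k / (1 + r^{2k})`. -/
def LamQ (k : ℕ) (r : ℝ) : ℝ := 2 * k * r ^ k / (1 + r ^ (2 * k))

/-- `f(u) = (k²/2) sin(2u)`. -/
def fNL (k : ℕ) (u : ℝ) : ℝ := (k : ℝ) ^ 2 / 2 * Real.sin (2 * u)

/-- `G_{λ,μ}(r) = f(Q_λ - Q_μ) - f(Q_λ) + f(Q_μ) - 4 (r/μ)^k (ΛQ_λ)² - 4 (r/λ)^{-k} (ΛQ_μ)²`. -/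
def Gfun (k : ℕ) (lam mu : ℝ) (r : ℝ) : ℝ :=
  fNL k (Qfun k (r / lam) - Qfun k (r / mu)) - fNL k (Qfun k (r / lam)) + fNL k (Qfun k (r / mu))
    - 4 * (r / mu) ^ k * LamQ k (r / lam) ^ 2
    - 4 * (r / lam) ^ (-(k : ℤ)) * LamQ k (r / mu) ^ 2

set_option maxHeartbeats 1000000

section Aux

lemma sin2at (x : ℝ) : Real.sin (2 * Real.arctan x) = 2*x/(1+x^2) := by
  have h : Real.sqrt (1+x^2) * Real.sqrt (1+x^2) = 1+x^2 := Real.mul_self_sqrt (by positivity)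
  have h0 : (1:ℝ)+x^2 ≠ 0 := by positivity
  have h1 : Real.sqrt (1+x^2) ≠ 0 := by positivity
  rw [Real.sin_two_mul, Real.sin_arctan, Real.cos_arctan]
  field_simp
  rw [Real.sq_sqrt (by positivity)]

lemma cos2at (x : ℝ) : Real.cos (2 * Real.arctan x) = (1-x^2)/(1+x^2) := by
  have h0 : (1:ℝ)+x^2 ≠ 0 := by positivity
  rw [Real.cos_two_mul, Real.cos_arctan]
  rw [div_pow, Real.sq_sqrt (by positivity : (0:ℝ) ≤ 1+x^2)]
  field_simp
  ring

lemma sin4at (x : ℝ) : Real.sin (2*(2 * Real.arctan x)) = 4*x*(1-x^2)/(1+x^2)^2 := by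
  have h0 : (1:ℝ)+x^2 ≠ 0 := by positivity
  rw [Real.sin_two_mul, sin2at, cos2at]; field_simp; ring

lemma cos4at (x : ℝ) : Real.cos (2*(2 * Real.arctan x)) = ((1-x^2)^2-4*x^2)/(1+x^2)^2 := by
  have h0 : (1:ℝ)+x^2 ≠ 0 := by positivity
  rw [Real.cos_two_mul, cos2at]; field_simp; ring

/-- Closed rational form of `Gfun` for positive radius. -/
lemma Gfun_eq_Gc (k : ℕ) (lam mu r : ℝ) (hl : 0 < lam) (hm : 0 < mu) (hr : 0 < r) :
    Gfun k lam mu r =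
      -16*(k:ℝ)^2 * (((r/mu)^k)^2 * (3*((r/lam)^k)^2+1+((r/lam)^k)^3*((r/mu)^k)*(3+((r/mu)^k)^2)))
        / (((r/lam)^k) * (1+((r/lam)^k)^2)^2 * (1+((r/mu)^k)^2)^2) := by
  have hxx : (r/lam)^(2*k) = ((r/lam)^k)^2 := by rw [← pow_mul, mul_comm]
  have hyy : (r/mu)^(2*k) = ((r/mu)^k)^2 := by rw [← pow_mul, mul_comm]
  have hz : (r/lam)^(-(k:ℤ)) = (((r/lam)^k))⁻¹ := by
    rw [zpow_neg, zpow_natCast]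
  unfold Gfun fNL Qfun LamQ
  rw [hxx, hyy, hz]
  set x := (r/lam)^k with hx
  set y := (r/mu)^k with hy
  have hx0 : 0 < x := by positivity
  have hy0 : 0 < y := by positivity
  have h1x : (1:ℝ)+x^2 ≠ 0 := by positivity
  have h1y : (1:ℝ)+y^2 ≠ 0 := by positivity
  have harg : 2*(2*Real.arctan x - 2*Real.arctan y)
      = 2*(2*Real.arctan x) - 2*(2*Real.arctan y) := by ring
  rw [harg, Real.sin_sub, sin4at, cos4at, sin4at, cos4at]
  field_simp
  ring

lemma hasDerivAt_pk (k : ℕ) (hk : 1 ≤ k) (lam r : ℝ) (hl : lam ≠ 0) (hr : r ≠ 0) :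
    HasDerivAt (fun s => (s/lam)^k) ((k:ℝ)*(r/lam)^k/r) r := by
  have h := ((hasDerivAt_id r).div_const lam).fun_pow k
  refine h.congr_deriv ?_
  simp only [id]
  have h1 : (r/lam)^k = (r/lam)^(k-1)*(r/lam) := by
    rw [← pow_succ, Nat.sub_add_cancel hk]
  rw [h1]
  field_simp

lemma hasDerivAt_Gc (k : ℕ) (hk : 1 ≤ k) (lam mu r : ℝ) (hl : 0 < lam) (hm : 0 < mu)
    (hr : 0 < r) :
    HasDerivAt (fun s => -16*(k:ℝ)^2 * (((s/mu)^k)^2 * (3*((s/lam)^k)^2+1+((s/lam)^k)^3*((s/mu)^k)*(3+((s/mu)^k)^2)))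
      / (((s/lam)^k) * (1+((s/lam)^k)^2)^2 * (1+((s/mu)^k)^2)^2))
      (-16*(k:ℝ)^3/r * (((r/mu)^k)^2 *
        ((12*((r/lam)^k)^2+2+18*((r/lam)^k)^3*((r/mu)^k)+8*((r/lam)^k)^3*((r/mu)^k)^3)
            * ((1+((r/lam)^k)^2)^2*(1+((r/mu)^k)^2)^2)
         - (3*((r/lam)^k)^2+1+3*((r/lam)^k)^3*((r/mu)^k)+((r/lam)^k)^3*((r/mu)^k)^3)
            * ((1+((r/lam)^k)^2)*(1+((r/mu)^k)^2)*((1+((r/lam)^k)^2)*(1+((r/mu)^k)^2)+4*((r/lam)^k)^2*(1+((r/mu)^k)^2)+4*((r/mu)^k)^2*(1+((r/lam)^k)^2)))))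
        / (((r/lam)^k) * ((1+((r/lam)^k)^2)^2*(1+((r/mu)^k)^2)^2)^2)) r := by
  have hu := hasDerivAt_pk k hk lam r hl.ne' hr.ne'
  have hv := hasDerivAt_pk k hk mu r hm.ne' hr.ne'
  have hu0 : (0:ℝ) < (r/lam)^k := by positivity
  have hv0 : (0:ℝ) < (r/mu)^k := by positivity
  have hNum := (hv.fun_pow 2).mul
    ((((hu.fun_pow 2).const_mul 3).add_const 1).add (((hu.fun_pow 3).mul hv).mul ((hv.fun_pow 2).const_add 3)))
  have hDen := (hu.mul (((hu.fun_pow 2).const_add 1).fun_pow 2)).mul (((hv.fun_pow 2).const_add 1).fun_pow 2)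
  have hden_ne : ((r/lam)^k) * (1+((r/lam)^k)^2)^2 * (1+((r/mu)^k)^2)^2 ≠ 0 := by positivity
  have h := ((hNum.const_mul (-16*(k:ℝ)^2)).div hDen hden_ne)
  refine h.congr_deriv ?_
  simp only [Pi.mul_apply, Pi.add_apply]
  generalize hgu : (r/lam)^k = u at hu0 ⊢
  generalize hgv : (r/mu)^k = v at hv0 ⊢
  have hr' : r ≠ 0 := hr.ne'
  have h1 : (0:ℝ) < 1 + u^2 := by positivity
  have h2 : (0:ℝ) < 1 + v^2 := by positivity
  field_simp
  ring

lemma aux_e9 (u v : ℝ) :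
    (1+u^2)*(1+v^2)*((1+u^2)*(1+v^2)+4*u^2*(1+v^2)+4*v^2*(1+u^2)) ≤ 9*((1+u^2)^2*(1+v^2)^2) := by
  nlinarith [sq_nonneg u, sq_nonneg v, sq_nonneg (u*v), mul_nonneg (sq_nonneg u) (sq_nonneg v)]

lemma aux_key (u v : ℝ) (hu : 0 < u) (hv : 0 ≤ v) (hvu : v ≤ u) :
    u * ((12*u^2+2+18*u^3*v+8*u^3*v^3) + 9*(3*u^2+1+3*u^3*v+u^3*v^3))
      ≤ 112 * min u 1 * ((1+u^2)^2*(1+v^2)^2) := by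
  rcases le_total u 1 with h | h
  · rw [min_eq_left h]
    have e1 : u^2 ≤ 1 := by nlinarith
    have e2' : u^3*v ≤ u^4 := by nlinarith [mul_le_mul_of_nonneg_left hvu (by positivity : (0:ℝ) ≤ u^3)]
    have e2u : u^4 ≤ 1 := pow_le_one₀ hu.le h
    have e3 : v^3 ≤ u^3 := by
      have := pow_le_pow_left₀ hv hvu 3
      simpa using this
    have e4' : u^3*v^3 ≤ u^6 := by
      calc u^3*v^3 ≤ u^3*u^3 := mul_le_mul_of_nonneg_left e3 (by positivity)
      _ = u^6 := by ring
    have e4u : u^6 ≤ 1 := pow_le_one₀ hu.le h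
    have e5 : 1 ≤ (1+u^2)^2*(1+v^2)^2 := by
      nlinarith [sq_nonneg u, sq_nonneg v, mul_nonneg (sq_nonneg u) (sq_nonneg v)]
    have hmn2 : (12*u^2+2+18*u^3*v+8*u^3*v^3) + 9*(3*u^2+1+3*u^3*v+u^3*v^3)
        ≤ 112 * ((1+u^2)^2*(1+v^2)^2) := by
      nlinarith [e1, e2', e2u, e4', e4u, e5]
    calc u * ((12*u^2+2+18*u^3*v+8*u^3*v^3) + 9*(3*u^2+1+3*u^3*v+u^3*v^3))
        ≤ u * (112*((1+u^2)^2*(1+v^2)^2)) := mul_le_mul_of_nonneg_left hmn2 hu.le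
    _ = 112 * u * ((1+u^2)^2*(1+v^2)^2) := by ring
  · rw [min_eq_right h]
    have A1 : u^4 ≤ (1+u^2)^2 := by nlinarith [sq_nonneg u]
    have hu3 : (1:ℝ) ≤ u^3 := one_le_pow₀ h
    have h3 : u^3 ≤ u^4 := by
      calc u^3 = u^3*1 := by ring
      _ ≤ u^3*u := mul_le_mul_of_nonneg_left h (by positivity)
      _ = u^4 := by ring
    have h1u : u ≤ u^4 := by
      calc u = u*1 := by ring
      _ ≤ u*u^3 := mul_le_mul_of_nonneg_left hu3 hu.le
      _ = u^4 := by ring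
    have hA : 45*(u^4*v) ≤ 22.5*u^4 + 22.5*(u^4*v^2) := by
      nlinarith [mul_nonneg (pow_nonneg hu.le 4) (sq_nonneg (v-1))]
    have hB : 17*(u^4*v^3) ≤ 8.5*(u^4*v^2) + 8.5*(u^4*v^4) := by
      nlinarith [mul_nonneg (mul_nonneg (pow_nonneg hu.le 4) (sq_nonneg v)) (sq_nonneg (v-1))]
    have step1 : u * ((12*u^2+2+18*u^3*v+8*u^3*v^3) + 9*(3*u^2+1+3*u^3*v+u^3*v^3))
        ≤ u^4 * (72.5 + 31*v^2 + 8.5*v^4) := by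
      nlinarith [hA, hB, h3, h1u]
    have hS : (0:ℝ) ≤ 72.5 + 31*v^2 + 8.5*v^4 := by positivity
    have hBnd : 72.5 + 31*v^2 + 8.5*v^4 ≤ 112*(1+v^2)^2 := by
      nlinarith [sq_nonneg v, sq_nonneg (v^2)]
    calc u * ((12*u^2+2+18*u^3*v+8*u^3*v^3) + 9*(3*u^2+1+3*u^3*v+u^3*v^3))
        ≤ u^4 * (72.5 + 31*v^2 + 8.5*v^4) := step1
    _ ≤ (1+u^2)^2 * (72.5 + 31*v^2 + 8.5*v^4) := mul_le_mul_of_nonneg_right A1 hS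
    _ ≤ (1+u^2)^2 * (112*(1+v^2)^2) := mul_le_mul_of_nonneg_left hBnd (by positivity)
    _ = 112 * 1 * ((1+u^2)^2*(1+v^2)^2) := by ring

lemma key_poly (u v : ℝ) (hu : 0 < u) (hv : 0 ≤ v) (hvu : v ≤ u) :
    u * |(12*u^2+2+18*u^3*v+8*u^3*v^3) * ((1+u^2)^2*(1+v^2)^2)
      - (3*u^2+1+3*u^3*v+u^3*v^3) * ((1+u^2)*(1+v^2)*((1+u^2)*(1+v^2)+4*u^2*(1+v^2)+4*v^2*(1+u^2)))|
    ≤ 112 * min u 1 * ((1+u^2)^2*(1+v^2)^2)^2 := by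
  have hd0 : (0:ℝ) < (1+u^2)^2*(1+v^2)^2 := by positivity
  have he0 : (0:ℝ) ≤ (1+u^2)*(1+v^2)*((1+u^2)*(1+v^2)+4*u^2*(1+v^2)+4*v^2*(1+u^2)) := by positivity
  have hm0 : (0:ℝ) ≤ 12*u^2+2+18*u^3*v+8*u^3*v^3 := by positivity
  have hn0 : (0:ℝ) ≤ 3*u^2+1+3*u^3*v+u^3*v^3 := by positivity
  have habs : |(12*u^2+2+18*u^3*v+8*u^3*v^3) * ((1+u^2)^2*(1+v^2)^2)
      - (3*u^2+1+3*u^3*v+u^3*v^3) * ((1+u^2)*(1+v^2)*((1+u^2)*(1+v^2)+4*u^2*(1+v^2)+4*v^2*(1+u^2)))|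
      ≤ (12*u^2+2+18*u^3*v+8*u^3*v^3) * ((1+u^2)^2*(1+v^2)^2)
      + (3*u^2+1+3*u^3*v+u^3*v^3) * ((1+u^2)*(1+v^2)*((1+u^2)*(1+v^2)+4*u^2*(1+v^2)+4*v^2*(1+u^2))) := by
    calc _ ≤ |(12*u^2+2+18*u^3*v+8*u^3*v^3) * ((1+u^2)^2*(1+v^2)^2)|
        + |(3*u^2+1+3*u^3*v+u^3*v^3) * ((1+u^2)*(1+v^2)*((1+u^2)*(1+v^2)+4*u^2*(1+v^2)+4*v^2*(1+u^2)))| := abs_sub _ _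
    _ = _ := by
        rw [abs_of_nonneg (by positivity), abs_of_nonneg (mul_nonneg hn0 he0)]
  have hsum : (12*u^2+2+18*u^3*v+8*u^3*v^3) * ((1+u^2)^2*(1+v^2)^2)
      + (3*u^2+1+3*u^3*v+u^3*v^3) * ((1+u^2)*(1+v^2)*((1+u^2)*(1+v^2)+4*u^2*(1+v^2)+4*v^2*(1+u^2)))
      ≤ ((12*u^2+2+18*u^3*v+8*u^3*v^3) + 9*(3*u^2+1+3*u^3*v+u^3*v^3)) * ((1+u^2)^2*(1+v^2)^2) := by
    have h2 := mul_le_mul_of_nonneg_left (aux_e9 u v) hn0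
    nlinarith [h2]
  calc u * |(12*u^2+2+18*u^3*v+8*u^3*v^3) * ((1+u^2)^2*(1+v^2)^2)
      - (3*u^2+1+3*u^3*v+u^3*v^3) * ((1+u^2)*(1+v^2)*((1+u^2)*(1+v^2)+4*u^2*(1+v^2)+4*v^2*(1+u^2)))|
      ≤ u * (((12*u^2+2+18*u^3*v+8*u^3*v^3) + 9*(3*u^2+1+3*u^3*v+u^3*v^3)) * ((1+u^2)^2*(1+v^2)^2)) :=
        mul_le_mul_of_nonneg_left (habs.trans hsum) hu.le
  _ = (u * ((12*u^2+2+18*u^3*v+8*u^3*v^3) + 9*(3*u^2+1+3*u^3*v+u^3*v^3))) * ((1+u^2)^2*(1+v^2)^2) := by ring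
  _ ≤ (112 * min u 1 * ((1+u^2)^2*(1+v^2)^2)) * ((1+u^2)^2*(1+v^2)^2) :=
        mul_le_mul_of_nonneg_right (aux_key u v hu hv hvu) hd0.le
  _ = 112 * min u 1 * ((1+u^2)^2*(1+v^2)^2)^2 := by ring

/-- Pointwise bound on the square of the derivative. -/
lemma deriv_sq_bound (k : ℕ) (hk : 1 ≤ k) (lam mu r : ℝ) (hl : 0 < lam) (hm : 0 < mu)
    (hlm : lam ≤ mu) (hr : 0 < r) :
    (deriv (Gfun k lam mu) r)^2
      ≤ (1792*(k:ℝ)^3)^2 * ((lam/mu)^k)^4 * (min ((r/lam)^k) 1)^2 / r^2 := by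
  set u := (r/lam)^k with hu'
  set v := (r/mu)^k with hv'
  have hu0 : 0 < u := by positivity
  have hv0 : 0 < v := by positivity
  have hε0 : 0 < (lam/mu)^k := by positivity
  have hveq : v = (lam/mu)^k * u := by
    rw [hv', hu', ← mul_pow]
    congr 1
    field_simp
  have hvu : v ≤ u := by
    rw [hv', hu']
    exact pow_le_pow_left₀ (by positivity) (div_le_div_of_nonneg_left hr.le hl hlm) k
  have hGc := hasDerivAt_Gc k hk lam mu r hl hm hr
  have hev : Gfun k lam mu =ᶠ[nhds r]
      (fun s => -16*(k:ℝ)^2 * (((s/mu)^k)^2 * (3*((s/lam)^k)^2+1+((s/lam)^k)^3*((s/mu)^k)*(3+((s/mu)^k)^2)))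
        / (((s/lam)^k) * (1+((s/lam)^k)^2)^2 * (1+((s/mu)^k)^2)^2)) := by
    filter_upwards [Ioi_mem_nhds hr] with s hs
    exact Gfun_eq_Gc k lam mu s hl hm hs
  have heq : deriv (Gfun k lam mu) r
      = -16*(k:ℝ)^3/r * (v^2 *
        ((12*u^2+2+18*u^3*v+8*u^3*v^3) * ((1+u^2)^2*(1+v^2)^2)
         - (3*u^2+1+3*u^3*v+u^3*v^3)
            * ((1+u^2)*(1+v^2)*((1+u^2)*(1+v^2)+4*u^2*(1+v^2)+4*v^2*(1+u^2)))))
        / (u * ((1+u^2)^2*(1+v^2)^2)^2) := by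
    rw [hev.deriv_eq, hGc.deriv]
  set W := (12*u^2+2+18*u^3*v+8*u^3*v^3) * ((1+u^2)^2*(1+v^2)^2)
      - (3*u^2+1+3*u^3*v+u^3*v^3)
          * ((1+u^2)*(1+v^2)*((1+u^2)*(1+v^2)+4*u^2*(1+v^2)+4*v^2*(1+u^2))) with hW
  set d := (1+u^2)^2*(1+v^2)^2 with hd
  have hd0 : 0 < d := by positivity
  have key : u * |W| ≤ 112 * min u 1 * d^2 := key_poly u v hu0 hv0.le hvu
  have hVsq : (deriv (Gfun k lam mu) r)^2
      = 256*(k:ℝ)^6*((lam/mu)^k)^4*(u*|W|)^2/(r^2*d^4) := by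
    rw [heq]
    have habs2 : (u*|W|)^2 = u^2*W^2 := by rw [mul_pow, sq_abs]
    rw [habs2, hveq]
    field_simp
    ring
  have hkeysq : (u*|W|)^2 ≤ (112 * min u 1 * d^2)^2 := by
    apply pow_le_pow_left₀ (by positivity) key
  calc (deriv (Gfun k lam mu) r)^2
      = 256*(k:ℝ)^6*((lam/mu)^k)^4*(u*|W|)^2/(r^2*d^4) := hVsq
  _ ≤ 256*(k:ℝ)^6*((lam/mu)^k)^4*(112 * min u 1 * d^2)^2/(r^2*d^4) := by
      gcongr
  _ = (1792*(k:ℝ)^3)^2 * ((lam/mu)^k)^4 * (min u 1)^2 / r^2 := by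
      field_simp
      ring

end Aux

/-- `‖r⁻² ∂_r G_{λ,μ}‖_{L²} ≤ C ν^{2k}/λ²`, with `L²` w.r.t. `r dr`. -/
theorem stmt7 (k : ℕ) (hk : 4 ≤ k) :
    ∃ C : ℝ, 0 < C ∧
      ∀ lam mu : ℝ, 0 < lam → 0 < mu → lam / mu ≤ 1 / 2 →
        Real.sqrt (∫ r in Ioi (0 : ℝ), (deriv (Gfun k lam mu) r) ^ 2 / r ^ 4 * r)
          ≤ C * (lam / mu) ^ (2 * k) / lam ^ 2 := by
  have hk1 : 1 ≤ k := by omega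
  have hk0 : (0:ℝ) < (k:ℝ) := by exact_mod_cast Nat.pos_of_ne_zero (by omega)
  refine ⟨1792*(k:ℝ)^3, by positivity, ?_⟩
  intro lam mu hl hm hnu
  have hlm : lam ≤ mu := by
    have h2 : lam * 2 ≤ 1 * mu := by
      rw [← div_le_div_iff₀ hm (by norm_num : (0:ℝ) < 2)]
      exact hnu
    linarith
  set ε := (lam/mu)^k with hε
  have hε0 : 0 < ε := by positivity
  set c2 := (1792*(k:ℝ)^3)^2 * ε^4 with hc2
  have hc20 : 0 < c2 := by positivity
  -- pointwise bound of the integrand by g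
  set g : ℝ → ℝ := fun r => c2 * (min ((r/lam)^k) 1)^2 / r^5 with hg
  have hFg_pt : ∀ r ∈ Ioi (0:ℝ), (deriv (Gfun k lam mu) r) ^ 2 / r ^ 4 * r ≤ g r := by
    intro r hr
    rw [mem_Ioi] at hr
    have hb := deriv_sq_bound k hk1 lam mu r hl hm hlm hr
    have h1 : (deriv (Gfun k lam mu) r) ^ 2 / r ^ 4 * r
        ≤ ((1792*(k:ℝ)^3)^2 * ε^4 * (min ((r/lam)^k) 1)^2 / r^2) / r ^ 4 * r := by
      gcongr
    refine h1.trans_eq ?_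
    rw [hg, hc2]
    field_simp
  -- nonnegativity of the integrand
  have hF0 : 0 ≤ᵐ[volume.restrict (Ioi (0:ℝ))]
      (fun r => (deriv (Gfun k lam mu) r) ^ 2 / r ^ 4 * r) := by
    rw [EventuallyLE, ae_restrict_iff' measurableSet_Ioi]
    filter_upwards with r hr
    have hr0 : 0 < r := hr
    positivity
  have hFg : (fun r => (deriv (Gfun k lam mu) r) ^ 2 / r ^ 4 * r)
      ≤ᵐ[volume.restrict (Ioi (0:ℝ))] g := by
    rw [EventuallyLE, ae_restrict_iff' measurableSet_Ioi]
    filter_upwards with r hr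
    exact hFg_pt r hr
  -- bounds used for integrability
  have hb1_pt : ∀ r ∈ Ioc (0:ℝ) lam, ‖g r‖ ≤ c2/lam^(2*k) * r^(2*k-5) := by
    intro r hr
    obtain ⟨hr0, hrlam⟩ := hr
    have hmin0 : 0 ≤ min ((r/lam)^k) 1 := le_min (by positivity) zero_le_one
    have hg0 : 0 ≤ g r := by rw [hg]; positivity
    rw [Real.norm_eq_abs, abs_of_nonneg hg0, hg]
    have hminle : (min ((r/lam)^k) 1)^2 ≤ ((r/lam)^k)^2 :=
      pow_le_pow_left₀ hmin0 (min_le_left _ _) 2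
    have h1 : c2 * (min ((r/lam)^k) 1)^2 / r^5 ≤ c2 * ((r/lam)^k)^2 / r^5 := by gcongr
    refine h1.trans_eq ?_
    have hrpow : r^(2*k) = r^(2*k-5)*r^5 := by
      rw [← pow_add]
      congr 1
      omega
    have hs : ((r/lam)^k)^2 = r^(2*k)/lam^(2*k) := by
      rw [div_pow, div_pow, ← pow_mul, ← pow_mul, mul_comm k 2]
    rw [hs, hrpow]
    field_simp
  have hb2_pt : ∀ r ∈ Ioi lam, ‖g r‖ ≤ c2 * r^(-(5:ℝ)) := by
    intro r hr
    rw [mem_Ioi] at hr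
    have hr0 : 0 < r := hl.trans hr
    have hmin0 : 0 ≤ min ((r/lam)^k) 1 := le_min (by positivity) zero_le_one
    have hg0 : 0 ≤ g r := by rw [hg]; positivity
    rw [Real.norm_eq_abs, abs_of_nonneg hg0, hg]
    have hminle : (min ((r/lam)^k) 1)^2 ≤ 1 :=
      pow_le_one₀ hmin0 (min_le_right _ _)
    have hrpow : r ^ (-(5:ℝ)) = (r^(5:ℕ))⁻¹ := by
      rw [Real.rpow_neg hr0.le, show ((5:ℝ)) = ((5:ℕ):ℝ) by norm_num, Real.rpow_natCast]
    rw [hrpow]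
    calc c2 * (min ((r/lam)^k) 1)^2 / r^5 ≤ c2 * 1 / r^5 := by gcongr
    _ = c2 * (r^(5:ℕ))⁻¹ := by rw [mul_one, div_eq_mul_inv]
  -- measurability of g
  have hgmeas : Measurable g := by
    rw [hg]
    apply Measurable.div
    · fun_prop
    · fun_prop
  -- integrability of g
  have hb1Int : IntegrableOn (fun r => c2/lam^(2*k) * r^(2*k-5)) (Ioc (0:ℝ) lam) :=
    (Continuous.integrableOn_Ioc (by continuity))
  have hgInt1 : IntegrableOn g (Ioc (0:ℝ) lam) :=
    Integrable.mono' hb1Int hgmeas.aestronglyMeasurable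
      ((ae_restrict_iff' measurableSet_Ioc).2 (ae_of_all _ hb1_pt))
  have hb2Int : IntegrableOn (fun r => c2 * r^(-(5:ℝ))) (Ioi lam) :=
    (integrableOn_Ioi_rpow_of_lt (by norm_num) hl).const_mul c2
  have hgInt2 : IntegrableOn g (Ioi lam) :=
    Integrable.mono' hb2Int hgmeas.aestronglyMeasurable
      ((ae_restrict_iff' measurableSet_Ioi).2 (ae_of_all _ hb2_pt))
  have hsplit : Ioi (0:ℝ) = Ioc 0 lam ∪ Ioi lam := (Ioc_union_Ioi_eq_Ioi hl.le).symm
  have hgInt : IntegrableOn g (Ioi (0:ℝ)) := by rw [hsplit]; exact hgInt1.union hgInt2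
  -- bound for the integral over (0, lam]
  have hlne : lam ≠ 0 := hl.ne'
  have hI1 : ∫ r in Ioc (0:ℝ) lam, g r ≤ c2/(4*lam^4) := by
    have hmono : ∫ r in Ioc (0:ℝ) lam, g r ≤ ∫ r in Ioc (0:ℝ) lam, c2/lam^(2*k) * r^(2*k-5) :=
      setIntegral_mono_on hgInt1 hb1Int measurableSet_Ioc
        (fun r hr => le_trans (le_abs_self _) (hb1_pt r hr))
    refine hmono.trans ?_
    have hval : ∫ r in Ioc (0:ℝ) lam, c2/lam^(2*k) * r^(2*k-5)
        = c2/lam^(2*k) * (lam^(2*k-4)/(((2*k-5:ℕ):ℝ)+1)) := by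
      rw [integral_const_mul, ← intervalIntegral.integral_of_le hl.le,
        integral_pow]
      rw [zero_pow (by omega : 2*k-5+1 ≠ 0)]
      rw [show 2*k-5+1 = 2*k-4 by omega]
      ring
    rw [hval]
    have hD4 : (4:ℝ) ≤ ((2*k-5:ℕ):ℝ)+1 := by
      have h3 : (3:ℕ) ≤ 2*k-5 := by omega
      have : (3:ℝ) ≤ ((2*k-5:ℕ):ℝ) := by exact_mod_cast h3
      linarith
    have hD0 : (0:ℝ) < ((2*k-5:ℕ):ℝ)+1 := by linarith
    have hps : lam^(2*k-4) * lam^4 = lam^(2*k) := by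
      rw [← pow_add]
      congr 1
      omega
    have heq2 : c2/lam^(2*k) * (lam^(2*k-4)/(((2*k-5:ℕ):ℝ)+1))
        = c2/(lam^4*(((2*k-5:ℕ):ℝ)+1)) := by
      rw [← hps]
      field_simp
    rw [heq2]
    rw [div_le_div_iff₀ (by positivity) (by positivity)]
    have : (4:ℝ)*lam^4 ≤ lam^4*(((2*k-5:ℕ):ℝ)+1) := by
      have := mul_le_mul_of_nonneg_left hD4 (by positivity : (0:ℝ) ≤ lam^4)
      linarith [this]
    nlinarith [hc20.le, this]
  -- bound for the integral over (lam, ∞)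
  have hI2 : ∫ r in Ioi lam, g r ≤ c2/(4*lam^4) := by
    have hmono : ∫ r in Ioi lam, g r ≤ ∫ r in Ioi lam, c2 * r^(-(5:ℝ)) :=
      setIntegral_mono_on hgInt2 hb2Int measurableSet_Ioi
        (fun r hr => le_trans (le_abs_self _) (hb2_pt r hr))
    refine hmono.trans ?_
    rw [integral_const_mul, integral_Ioi_rpow_of_lt (by norm_num) hl]
    have h4 : -lam ^ ((-5:ℝ) + 1) / (-5 + 1) = lam^((-4:ℝ))/4 := by
      norm_num
    rw [h4]
    have h5 : lam ^ ((-4:ℝ)) = (lam^(4:ℕ))⁻¹ := by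
      rw [Real.rpow_neg hl.le, show ((4:ℝ)) = ((4:ℕ):ℝ) by norm_num, Real.rpow_natCast]
    rw [h5]
    apply le_of_eq
    rw [inv_eq_one_div]
    field_simp
  -- combine
  have hIg : ∫ r in Ioi (0:ℝ), g r ≤ c2/lam^4 := by
    have hsplit2 : ∫ r in Ioi (0:ℝ), g r
        = (∫ r in Ioc (0:ℝ) lam, g r) + (∫ r in Ioi lam, g r) := by
      rw [hsplit]
      exact setIntegral_union (Ioc_disjoint_Ioi le_rfl) measurableSet_Ioi hgInt1 hgInt2
    rw [hsplit2]
    have : c2/(4*lam^4) + c2/(4*lam^4) ≤ c2/lam^4 := by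
      rw [← add_div, div_le_div_iff₀ (by positivity) (by positivity)]
      nlinarith [hc20.le, pow_pos hl 4]
    linarith [hI1, hI2]
  have hInt_le : (∫ r in Ioi (0:ℝ), (deriv (Gfun k lam mu) r) ^ 2 / r ^ 4 * r) ≤ c2/lam^4 :=
    le_trans (integral_mono_of_nonneg hF0 hgInt hFg) hIg
  -- conclude with square roots
  have hsq : c2/lam^4 = (1792*(k:ℝ)^3 * ε^2/lam^2)^2 := by
    rw [hc2]
    field_simp
  calc Real.sqrt (∫ r in Ioi (0:ℝ), (deriv (Gfun k lam mu) r) ^ 2 / r ^ 4 * r)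
      ≤ Real.sqrt (c2/lam^4) := Real.sqrt_le_sqrt hInt_le
  _ = 1792*(k:ℝ)^3 * ε^2/lam^2 := by
      rw [hsq, Real.sqrt_sq (by positivity)]
  _ = 1792*(k:ℝ)^3 * (lam/mu)^(2*k)/lam^2 := by
      rw [hε, ← pow_mul, mul_comm k 2]
end
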